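/- arXiv:2304.12915 — 7 statements merged into one kernel-verified Lean document; each statement's English description precedes it below -/
import Mathlib

section
/- The cycle C₅ is embeddable in its complement, and for every embedding σ of C₅, the edge-sum graph C₅ ⊕ σ(C₅) is the complete graph K₅; hence C₅ is uniquely embeddable. -/
open SimpleGraph

/-- The cycle graph on `ZMod n`: `i` and `j` adjacent iff they differ by one. -/
def CycGraph (n : ℕ) : SimpleGraph (ZMod n) where
  Adj i j := i ≠ j ∧ (i = j + 1 ∨ j = i + 1)
  symm := by constructor; rintro i j ⟨hne, h⟩; exact ⟨hne.symm, h.symm⟩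
  loopless := by constructor; rintro i ⟨hne, _⟩; exact hne rfl

/-- `σ` is an embedding of `G` into its complement. -/
def IsGraphEmbedding {V : Type*} (G : SimpleGraph V) (σ : Equiv.Perm V) : Prop :=
  ∀ x y, G.Adj x y → ¬ G.Adj (σ x) (σ y)

/-- The edge sum `G ⊕ σ(G)`. -/
def EdgeSum {V : Type*} (G : SimpleGraph V) (σ : Equiv.Perm V) : SimpleGraph V :=
  G ⊔ G.map σ.toEmbedding

/-- Vertex-disjoint union of two graphs. -/
def DisjUnion {α β : Type*} (G : SimpleGraph α) (H : SimpleGraph β) :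
    SimpleGraph (α ⊕ β) where
  Adj x y :=
    (∃ a b, x = Sum.inl a ∧ y = Sum.inl b ∧ G.Adj a b) ∨
    (∃ a b, x = Sum.inr a ∧ y = Sum.inr b ∧ H.Adj a b)
  symm := by
    constructor
    rintro x y (⟨a, b, rfl, rfl, h⟩ | ⟨a, b, rfl, rfl, h⟩)
    · exact Or.inl ⟨b, a, rfl, rfl, h.symm⟩
    · exact Or.inr ⟨b, a, rfl, rfl, h.symm⟩
  loopless := by
    constructor
    rintro x (⟨a, b, rfl, h, hadj⟩ | ⟨a, b, rfl, h, hadj⟩) <;>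
      · cases h; exact hadj.ne rfl


instance : DecidableRel (CycGraph 5).Adj := fun _ _ => instDecidableAnd

set_option maxRecDepth 10000 in
lemma c5_exists_embedding : ∃ σ : Equiv.Perm (ZMod 5), IsGraphEmbedding (CycGraph 5) σ := by
  refine ⟨⟨fun x => 2*x, fun x => 3*x, by decide, by decide⟩, ?_⟩
  intro x y; revert x y; decide

set_option maxRecDepth 100000 in
lemma c5_key : ∀ σ : Equiv.Perm (ZMod 5),
    (∀ x y, (CycGraph 5).Adj x y → ¬ (CycGraph 5).Adj (σ x) (σ y)) →
    ∀ x y : ZMod 5, x ≠ y →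
      (CycGraph 5).Adj x y ∨ ∃ a b, (CycGraph 5).Adj a b ∧ σ a = x ∧ σ b = y := by decide

/-- `C₅` is embeddable, and every embedding `σ` satisfies `C₅ ⊕ σ(C₅) = K₅`;
hence `C₅` is uniquely embeddable. -/
theorem c5_uniquely_embeddable :
    (∃ σ : Equiv.Perm (ZMod 5), IsGraphEmbedding (CycGraph 5) σ) ∧
    ∀ σ : Equiv.Perm (ZMod 5), IsGraphEmbedding (CycGraph 5) σ →
      EdgeSum (CycGraph 5) σ = ⊤ := by
  refine ⟨c5_exists_embedding, fun σ hσ => ?_⟩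
  ext x y
  simp only [EdgeSum, SimpleGraph.sup_adj, SimpleGraph.map_adj, SimpleGraph.top_adj]
  simp only [Equiv.coe_toEmbedding]
  constructor
  · rintro (h | ⟨a, b, hab, rfl, rfl⟩)
    · exact h.1
    · exact fun he => hab.1 (σ.injective he)
  · intro hxy
    exact c5_key σ hσ x y hxy
end

section
/- The cycle C₇ admits two distinct embeddings in its complement: there exist embeddings σ₁ and σ₂ of C₇ such that the complement of C₇ ⊕ σ₁(C₇) is isomorphic to C₇, while the complement of C₇ ⊕ σ₂(C₇) is isomorphic to C₃ ∪ C₄; in particular C₇ is not uniquely embeddable. -/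
open SimpleGraph

def sig1 : Equiv.Perm (ZMod 7) where
  toFun i := 2 * i
  invFun i := 4 * i
  left_inv := by decide
  right_inv := by decide

def sig2 : Equiv.Perm (ZMod 7) where
  toFun i := ![0, 2, 5, 1, 3, 6, 4] (Fin.ofNat 7 i.val)
  invFun i := ![0, 3, 1, 4, 6, 2, 5] (Fin.ofNat 7 i.val)
  left_inv := by decide
  right_inv := by decide

def phi1 : ZMod 7 ≃ ZMod 7 where
  toFun i := 5 * i
  invFun i := 3 * i
  left_inv := by decide
  right_inv := by decide

def phi2 : ZMod 7 ≃ (ZMod 3 ⊕ ZMod 4) where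
  toFun i := ![Sum.inl 0, Sum.inr 0, Sum.inr 2, Sum.inl 1, Sum.inr 1, Sum.inl 2, Sum.inr 3] (Fin.ofNat 7 i.val)
  invFun x := Sum.elim (fun a => ![(0 : ZMod 7), 3, 5] (Fin.ofNat 3 a.val)) (fun b => ![(1 : ZMod 7), 4, 2, 6] (Fin.ofNat 4 b.val)) x
  left_inv := by decide
  right_inv := by decide

instance instC7 : DecidableRel (CycGraph 7).Adj := fun i j =>
  inferInstanceAs (Decidable (i ≠ j ∧ (i = j + 1 ∨ j = i + 1)))

instance instC3 : DecidableRel (CycGraph 3).Adj := fun i j =>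
  inferInstanceAs (Decidable (i ≠ j ∧ (i = j + 1 ∨ j = i + 1)))

instance instC4 : DecidableRel (CycGraph 4).Adj := fun i j =>
  inferInstanceAs (Decidable (i ≠ j ∧ (i = j + 1 ∨ j = i + 1)))

instance instE1 : DecidableRel (EdgeSum (CycGraph 7) sig1).Adj := fun i j =>
  inferInstanceAs (Decidable ((CycGraph 7).Adj i j ∨
    (i ≠ j ∧ ∃ a b, (CycGraph 7).Adj a b ∧ sig1 a = i ∧ sig1 b = j)))

instance instE2 : DecidableRel (EdgeSum (CycGraph 7) sig2).Adj := fun i j =>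
  inferInstanceAs (Decidable ((CycGraph 7).Adj i j ∨
    (i ≠ j ∧ ∃ a b, (CycGraph 7).Adj a b ∧ sig2 a = i ∧ sig2 b = j)))

instance instDU : DecidableRel (DisjUnion (CycGraph 3) (CycGraph 4)).Adj := fun x y =>
  inferInstanceAs (Decidable
    ((∃ a b, x = Sum.inl a ∧ y = Sum.inl b ∧ (CycGraph 3).Adj a b) ∨
     (∃ a b, x = Sum.inr a ∧ y = Sum.inr b ∧ (CycGraph 4).Adj a b)))

/-- `C₇` has two distinct embeddings: one whose edge-sum has complement isomorphic to `C₇`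
and one whose edge-sum has complement isomorphic to `C₃ ∪ C₄`; the two edge-sums are not
isomorphic, so `C₇` is not uniquely embeddable. -/
theorem c7_two_distinct_embeddings :
    ∃ σ₁ σ₂ : Equiv.Perm (ZMod 7),
      IsGraphEmbedding (CycGraph 7) σ₁ ∧ IsGraphEmbedding (CycGraph 7) σ₂ ∧
      Nonempty ((EdgeSum (CycGraph 7) σ₁)ᶜ ≃g CycGraph 7) ∧
      Nonempty ((EdgeSum (CycGraph 7) σ₂)ᶜ ≃g DisjUnion (CycGraph 3) (CycGraph 4)) ∧
      ¬ Nonempty (EdgeSum (CycGraph 7) σ₁ ≃g EdgeSum (CycGraph 7) σ₂) := by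
  have h1 : ∀ {a b : ZMod 7},
      (CycGraph 7).Adj (phi1 a) (phi1 b) ↔ (EdgeSum (CycGraph 7) sig1)ᶜ.Adj a b := by decide
  have h2 : ∀ {a b : ZMod 7},
      (DisjUnion (CycGraph 3) (CycGraph 4)).Adj (phi2 a) (phi2 b) ↔
        (EdgeSum (CycGraph 7) sig2)ᶜ.Adj a b := by decide
  refine ⟨sig1, sig2, ?_, ?_, ⟨⟨phi1, h1⟩⟩, ⟨⟨phi2, h2⟩⟩, ?_⟩
  · show ∀ x y, _; decide
  · show ∀ x y, _; decide
  · rintro ⟨e⟩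
    have e' : (EdgeSum (CycGraph 7) sig1)ᶜ ≃g (EdgeSum (CycGraph 7) sig2)ᶜ :=
      ⟨e.toEquiv, by
        intro a b
        simp only [SimpleGraph.compl_adj]
        rw [show (EdgeSum (CycGraph 7) sig2).Adj (e.toEquiv a) (e.toEquiv b) ↔
            (EdgeSum (CycGraph 7) sig1).Adj a b from e.map_rel_iff,
          show e.toEquiv a ≠ e.toEquiv b ↔ a ≠ b from not_congr e.toEquiv.apply_eq_iff_eq]⟩
    have iso : CycGraph 7 ≃g DisjUnion (CycGraph 3) (CycGraph 4) :=
      ((SimpleGraph.Iso.symm ⟨phi1, @h1⟩).trans e').trans ⟨phi2, @h2⟩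
    have tri : ∀ a b c : ZMod 7, (CycGraph 7).Adj a b → (CycGraph 7).Adj b c →
        (CycGraph 7).Adj a c → False := by decide
    have h01 : (DisjUnion (CycGraph 3) (CycGraph 4)).Adj (Sum.inl 0) (Sum.inl 1) := by decide
    have h12 : (DisjUnion (CycGraph 3) (CycGraph 4)).Adj (Sum.inl 1) (Sum.inl 2) := by decide
    have h02 : (DisjUnion (CycGraph 3) (CycGraph 4)).Adj (Sum.inl 0) (Sum.inl 2) := by decide
    exact tri _ _ _ (iso.symm.map_adj_iff.mpr h01) (iso.symm.map_adj_iff.mpr h12)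
      (iso.symm.map_adj_iff.mpr h02)
end

section
/- For every n ≥ 8, the cycle Cₙ admits an embedding σ in its complement such that the graph Cₙ ⊕ σ(Cₙ) contains a clique on 4 vertices. -/
open SimpleGraph

/-! ### Auxiliary construction

We realize the permutation `σ` by the sequence `1, 3, 0, 2, 5, 7, 9, …, 4, 6, 8, …`
(odds from `5` up, then evens from `4` up), described on `ℕ`-values by `Fv`,
with inverse `Gv`. -/

/-- Value of the embedding permutation at position `m` (on natural representatives). -/
def Fv (n m : ℕ) : ℕ :=
  if m = 0 then 1 else if m = 1 then 3 else if m = 2 then 0 else if m = 3 then 2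
  else if 2 * m ≤ n + 2 then 2 * m - 3 else 2 * m - 4 - 2 * ((n - 4) / 2)

/-- Inverse of `Fv`. -/
def Gv (n w : ℕ) : ℕ :=
  if w = 1 then 0 else if w = 3 then 1 else if w = 0 then 2 else if w = 2 then 3
  else if w % 2 = 1 then (w + 3) / 2 else (w + 4 + 2 * ((n - 4) / 2)) / 2

lemma Fv_lt {n m : ℕ} (hn : 8 ≤ n) (hm : m < n) : Fv n m < n := by
  unfold Fv; split_ifs <;> omega

lemma Gv_lt {n w : ℕ} (hn : 8 ≤ n) (_hw : w < n) : Gv n w < n := by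
  unfold Gv; split_ifs <;> omega

lemma Gv_Fv {n m : ℕ} (hn : 8 ≤ n) (hm : m < n) : Gv n (Fv n m) = m := by
  unfold Fv; split_ifs <;> (unfold Gv; split_ifs <;> first | contradiction | omega)

lemma Fv_Gv {n w : ℕ} (hn : 8 ≤ n) (hw : w < n) : Fv n (Gv n w) = w := by
  unfold Gv; split_ifs <;> (unfold Fv; split_ifs <;> first | contradiction | omega)

lemma Fv_key {n a b : ℕ} (hn : 8 ≤ n) (ha : a < n) (hb : b < n)
    (h : a = b + 1 ∨ (b + 1 = n ∧ a = 0) ∨ b = a + 1 ∨ (a + 1 = n ∧ b = 0)) :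
    ¬(Fv n a = Fv n b + 1) ∧ ¬(Fv n b + 1 = n ∧ Fv n a = 0) ∧
      ¬(Fv n b = Fv n a + 1) ∧ ¬(Fv n a + 1 = n ∧ Fv n b = 0) := by
  unfold Fv; split_ifs <;>
    simp only [not_false_eq_true, true_and, and_true, false_and, and_false, not_and] <;>
    first | contradiction | omega

/-- The permutation of `ZMod n` realizing `Fv`. -/
def sigmaPerm (n : ℕ) (hn : 8 ≤ n) : Equiv.Perm (ZMod n) where
  toFun x := ((Fv n x.val : ℕ) : ZMod n)
  invFun x := ((Gv n x.val : ℕ) : ZMod n)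
  left_inv x := by
    haveI : NeZero n := ⟨by omega⟩
    dsimp only
    rw [ZMod.val_cast_of_lt (Fv_lt hn (ZMod.val_lt x)), Gv_Fv hn (ZMod.val_lt x)]
    exact ZMod.natCast_rightInverse x
  right_inv x := by
    haveI : NeZero n := ⟨by omega⟩
    dsimp only
    rw [ZMod.val_cast_of_lt (Gv_lt hn (ZMod.val_lt x)), Fv_Gv hn (ZMod.val_lt x)]
    exact ZMod.natCast_rightInverse x

lemma sigmaPerm_apply {n : ℕ} (hn : 8 ≤ n) (x : ZMod n) :
    sigmaPerm n hn x = ((Fv n x.val : ℕ) : ZMod n) := rfl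

lemma zmod_succ_val {n : ℕ} (hn : 8 ≤ n) {x y : ZMod n} (h : x = y + 1) :
    x.val = y.val + 1 ∨ (y.val + 1 = n ∧ x.val = 0) := by
  haveI : NeZero n := ⟨by omega⟩
  have hy := ZMod.val_lt y
  have hv : (y + 1).val = (y.val + 1) % n := by
    rw [ZMod.val_add, ZMod.val_one'' (by omega : n ≠ 1)]
  rcases lt_or_ge (y.val + 1) n with h' | h'
  · left; rw [h, hv, Nat.mod_eq_of_lt h']
  · right
    have he : y.val + 1 = n := by omega
    exact ⟨he, by rw [h, hv, he, Nat.mod_self]⟩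

/-- For every `n ≥ 8`, the cycle `Cₙ` admits an embedding `σ` such that `Cₙ ⊕ σ(Cₙ)`
contains a clique on 4 vertices. -/
theorem cn_embedding_with_K4 (n : ℕ) (hn : 8 ≤ n) :
    ∃ σ : Equiv.Perm (ZMod n), IsGraphEmbedding (CycGraph n) σ ∧
      ∃ s : Finset (ZMod n), (EdgeSum (CycGraph n) σ).IsNClique 4 s := by
  haveI : NeZero n := ⟨by omega⟩
  refine ⟨sigmaPerm n hn, ?_, ?_⟩
  · -- embedding property
    rintro x y ⟨hne, hor⟩ ⟨hne', hor'⟩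
    have ha := ZMod.val_lt x
    have hb := ZMod.val_lt y
    have H : x.val = y.val + 1 ∨ (y.val + 1 = n ∧ x.val = 0) ∨
        y.val = x.val + 1 ∨ (x.val + 1 = n ∧ y.val = 0) := by
      rcases hor with h | h
      · rcases zmod_succ_val hn h with h' | h'
        · exact Or.inl h'
        · exact Or.inr (Or.inl h')
      · rcases zmod_succ_val hn h with h' | h'
        · exact Or.inr (Or.inr (Or.inl h'))
        · exact Or.inr (Or.inr (Or.inr h'))
    have K := Fv_key hn ha hb H
    have hvx : (sigmaPerm n hn x).val = Fv n x.val := by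
      rw [sigmaPerm_apply]; exact ZMod.val_cast_of_lt (Fv_lt hn ha)
    have hvy : (sigmaPerm n hn y).val = Fv n y.val := by
      rw [sigmaPerm_apply]; exact ZMod.val_cast_of_lt (Fv_lt hn hb)
    rcases hor' with h | h
    · rcases zmod_succ_val hn h with h' | h' <;> rw [hvx, hvy] at h'
      · exact K.1 h'
      · exact K.2.1 h'
    · rcases zmod_succ_val hn h with h' | h' <;> rw [hvx, hvy] at h'
      · exact K.2.2.1 h'
      · exact K.2.2.2 h'
  · -- the K4
    have hv0 : (0 : ZMod n).val = 0 := ZMod.val_zero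
    have hv1 : (1 : ZMod n).val = 1 := ZMod.val_one'' (by omega)
    have hv2 : (2 : ZMod n).val = 2 := by
      rw [← Nat.cast_ofNat, ZMod.val_cast_of_lt (by omega)]
    have hv3 : (3 : ZMod n).val = 3 := by
      rw [← Nat.cast_ofNat, ZMod.val_cast_of_lt (by omega)]
    have ne01 : (0 : ZMod n) ≠ 1 := by
      intro h; have := congrArg ZMod.val h; rw [hv0, hv1] at this; omega
    have ne02 : (0 : ZMod n) ≠ 2 := by
      intro h; have := congrArg ZMod.val h; rw [hv0, hv2] at this; omega
    have ne03 : (0 : ZMod n) ≠ 3 := by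
      intro h; have := congrArg ZMod.val h; rw [hv0, hv3] at this; omega
    have ne12 : (1 : ZMod n) ≠ 2 := by
      intro h; have := congrArg ZMod.val h; rw [hv1, hv2] at this; omega
    have ne13 : (1 : ZMod n) ≠ 3 := by
      intro h; have := congrArg ZMod.val h; rw [hv1, hv3] at this; omega
    have ne23 : (2 : ZMod n) ≠ 3 := by
      intro h; have := congrArg ZMod.val h; rw [hv2, hv3] at this; omega
    have a01 : (CycGraph n).Adj 0 1 := ⟨ne01, Or.inr (zero_add 1).symm⟩
    have a12 : (CycGraph n).Adj 1 2 := ⟨ne12, Or.inr one_add_one_eq_two.symm⟩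
    have a23 : (CycGraph n).Adj 2 3 := ⟨ne23, Or.inr two_add_one_eq_three.symm⟩
    have s0 : sigmaPerm n hn 0 = 1 := by
      rw [sigmaPerm_apply, hv0, show Fv n 0 = 1 from rfl, Nat.cast_one]
    have s1 : sigmaPerm n hn 1 = 3 := by
      rw [sigmaPerm_apply, hv1, show Fv n 1 = 3 from rfl, Nat.cast_ofNat]
    have s2 : sigmaPerm n hn 2 = 0 := by
      rw [sigmaPerm_apply, hv2, show Fv n 2 = 0 from rfl, Nat.cast_zero]
    have s3 : sigmaPerm n hn 3 = 2 := by
      rw [sigmaPerm_apply, hv3, show Fv n 3 = 2 from rfl, Nat.cast_ofNat]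
    have e01 : (EdgeSum (CycGraph n) (sigmaPerm n hn)).Adj 0 1 := by
      simp only [EdgeSum, SimpleGraph.sup_adj]; exact Or.inl a01
    have e12 : (EdgeSum (CycGraph n) (sigmaPerm n hn)).Adj 1 2 := by
      simp only [EdgeSum, SimpleGraph.sup_adj]; exact Or.inl a12
    have e23 : (EdgeSum (CycGraph n) (sigmaPerm n hn)).Adj 2 3 := by
      simp only [EdgeSum, SimpleGraph.sup_adj]; exact Or.inl a23
    have e02 : (EdgeSum (CycGraph n) (sigmaPerm n hn)).Adj 0 2 := by
      simp only [EdgeSum, SimpleGraph.sup_adj, SimpleGraph.map_adj, Equiv.coe_toEmbedding]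
      exact Or.inr ⟨ne02, 2, 3, a23, s2, s3⟩
    have e13 : (EdgeSum (CycGraph n) (sigmaPerm n hn)).Adj 1 3 := by
      simp only [EdgeSum, SimpleGraph.sup_adj, SimpleGraph.map_adj, Equiv.coe_toEmbedding]
      exact Or.inr ⟨ne13, 0, 1, a01, s0, s1⟩
    have e03 : (EdgeSum (CycGraph n) (sigmaPerm n hn)).Adj 0 3 := by
      simp only [EdgeSum, SimpleGraph.sup_adj, SimpleGraph.map_adj, Equiv.coe_toEmbedding]
      exact Or.inr ⟨ne03, 2, 1, a12.symm, s2, s1⟩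
    refine ⟨{0, 1, 2, 3}, ?_, ?_⟩
    · intro u hu v hv huv
      simp only [Finset.coe_insert, Set.mem_insert_iff, Finset.coe_singleton,
        Set.mem_singleton_iff] at hu hv
      rcases hu with rfl | rfl | rfl | rfl <;> rcases hv with rfl | rfl | rfl | rfl <;>
        first
          | exact absurd rfl huv
          | exact e01 | exact e01.symm | exact e02 | exact e02.symm | exact e03
          | exact e03.symm | exact e12 | exact e12.symm | exact e13 | exact e13.symm
          | exact e23 | exact e23.symm
    · rw [Finset.card_insert_of_notMem (by simp [ne01, ne02, ne03]),
        Finset.card_insert_of_notMem (by simp [ne12, ne13]),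
        Finset.card_insert_of_notMem (by simp [ne23]), Finset.card_singleton]
end

section
/- Let n ≥ 8 and let r with 3 ≤ r ≤ n/2 − 1 be coprime to n. Then the graph on vertices v₁,…,vₙ whose edge set is the union of the cycle edges vᵢvᵢ₊₁ (mod n) and the edges vᵢvᵢ₊ᵣ (mod n) is the edge-disjoint union of two Hamiltonian cycles and is K₄-free. -/
open SimpleGraph

/-- The graph on `ZMod n` whose edges join vertices at distance `r`. -/
def DistGraph (n r : ℕ) : SimpleGraph (ZMod n) where
  Adj i j := i ≠ j ∧ (i = j + r ∨ j = i + r)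
  symm := by constructor; rintro i j ⟨hne, h⟩; exact ⟨hne.symm, h.symm⟩
  loopless := by constructor; rintro i ⟨hne, _⟩; exact hne rfl


lemma my_small (n : ℕ) (v : ℤ) (hd : (n:ℤ) ∣ v) (h0 : v ≠ 0) (hlt : v.natAbs < n) : False := by
  have h1 : n ∣ v.natAbs := by
    have := Int.natAbs_dvd_natAbs.mpr hd
    simpa using this
  have := Nat.le_of_dvd (by omega) h1
  omega

lemma my_core (n r : ℕ) (hn : 8 ≤ n) (hr3 : 3 ≤ r) (hrn : 2*r+2 ≤ n)
    (hcop : Nat.Coprime r n) (A B : ℤ)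
    (hsum : A.natAbs + B.natAbs ≤ 3) (hnz : ¬(A = 0 ∧ B = 0))
    (h : (n:ℤ) ∣ A * (r:ℤ) + B) : False := by
  have h3r' : ¬ (n:ℤ) ∣ 3 * (r:ℤ) := by
    intro hd
    have hd' : n ∣ 3 * r := by exact_mod_cast hd
    have h3 := Nat.Coprime.dvd_of_dvd_mul_right hcop.symm hd'
    have := Nat.le_of_dvd (by norm_num) h3
    omega
  have hA0 : A.natAbs ≤ 3 := by omega
  have hB0 : B.natAbs ≤ 3 := by omega
  have hA1 : -3 ≤ A := by omega
  have hA2 : A ≤ 3 := by omega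
  have hB1 : -3 ≤ B := by omega
  have hB2 : B ≤ 3 := by omega
  interval_cases A <;> interval_cases B <;>
    first
      | omega
      | exact my_small n _ h (by omega) (by omega)
      | exact h3r' (by simpa using h)
      | exact h3r' (by simpa using dvd_neg.mpr h)

lemma my_tri (n r : ℕ) (hn : 8 ≤ n) (hr3 : 3 ≤ r) (hrn : 2*r+2 ≤ n)
    (hcop : Nat.Coprime r n) :
    (CycGraph n ⊔ DistGraph n r).CliqueFree 3 := by
  intro t ht
  obtain ⟨a, b, c, hab, hac, hbc, rfl⟩ := Finset.card_eq_three.mp ht.card_eq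
  have h1 := ht.1 (by simp) (by simp) hab
  have h2 := ht.1 (by simp) (by simp) hbc
  have h3 := ht.1 (by simp) (by simp) hac
  have decomp : ∀ x y : ZMod n, (CycGraph n ⊔ DistGraph n r).Adj x y →
      ∃ p q : ℤ, ((p = 0 ∧ (q = 1 ∨ q = -1)) ∨ (q = 0 ∧ (p = 1 ∨ p = -1))) ∧
        x - y = ((p * r + q : ℤ) : ZMod n) := by
    rintro x y (⟨hne, hc | hc⟩ | ⟨hne, hc | hc⟩)
    · exact ⟨0, 1, by tauto, by rw [hc]; push_cast; ring⟩
    · exact ⟨0, -1, by tauto, by rw [hc]; push_cast; ring⟩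
    · exact ⟨1, 0, by tauto, by rw [hc]; push_cast; ring⟩
    · exact ⟨-1, 0, by tauto, by rw [hc]; push_cast; ring⟩
  obtain ⟨p1, q1, t1, e1⟩ := decomp a b h1
  obtain ⟨p2, q2, t2, e2⟩ := decomp b c h2
  obtain ⟨p3, q3, t3, e3⟩ := decomp a c h3
  have key : (((p1 + p2 - p3) * r + (q1 + q2 - q3) : ℤ) : ZMod n) = 0 := by
    push_cast
    push_cast at e1 e2 e3
    linear_combination e3 - e1 - e2
  have hd : (n:ℤ) ∣ ((p1 + p2 - p3) * r + (q1 + q2 - q3)) :=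
    (ZMod.intCast_zmod_eq_zero_iff_dvd _ n).mp key
  refine my_core n r hn hr3 hrn hcop _ _ ?_ ?_ hd
  · rcases t1 with ⟨rfl, h|h⟩|⟨rfl, h|h⟩ <;> rcases t2 with ⟨rfl, h'|h'⟩|⟨rfl, h'|h'⟩ <;>
      rcases t3 with ⟨rfl, h''|h''⟩|⟨rfl, h''|h''⟩ <;> omega
  · rcases t1 with ⟨rfl, h|h⟩|⟨rfl, h|h⟩ <;> rcases t2 with ⟨rfl, h'|h'⟩|⟨rfl, h'|h'⟩ <;>
      rcases t3 with ⟨rfl, h''|h''⟩|⟨rfl, h''|h''⟩ <;> omega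

/-- For `n ≥ 8` and `3 ≤ r ≤ n/2 - 1` coprime to `n`, the union of the cycle edges
`vᵢvᵢ₊₁` with the edges `vᵢvᵢ₊ᵣ` is an edge-disjoint union of two Hamiltonian cycles
and is `K₄`-free. -/
theorem cycle_plus_distance_K4_free (n r : ℕ) (hn : 8 ≤ n) (hr3 : 3 ≤ r)
    (hr : r ≤ n / 2 - 1) (hcop : Nat.Coprime r n) :
    CycGraph n ⊓ DistGraph n r = ⊥ ∧
    Nonempty (DistGraph n r ≃g CycGraph n) ∧
    (CycGraph n ⊔ DistGraph n r).CliqueFree 4 := by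
  have hrn : 2 * r + 2 ≤ n := by omega
  have conv : ∀ A : ℤ, ((A : ℤ) : ZMod n) = 0 → (n:ℤ) ∣ A := fun A hA =>
    (ZMod.intCast_zmod_eq_zero_iff_dvd A n).mp hA
  refine ⟨?_, ?_, ?_⟩
  · ext i j
    simp only [inf_adj, bot_adj, iff_false, not_and]
    rintro ⟨hne, hc⟩ ⟨-, hd⟩
    rcases hc with hc | hc <;> rcases hd with hd | hd
    · exact my_core n r hn hr3 hrn hcop 1 (-1) (by omega) (by omega)
        (conv _ (by push_cast; linear_combination hc - hd))
    · exact my_core n r hn hr3 hrn hcop 1 1 (by omega) (by omega)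
        (conv _ (by push_cast; linear_combination - hc - hd))
    · exact my_core n r hn hr3 hrn hcop 1 1 (by omega) (by omega)
        (conv _ (by push_cast; linear_combination - hc - hd))
    · exact my_core n r hn hr3 hrn hcop 1 (-1) (by omega) (by omega)
        (conv _ (by push_cast; linear_combination hc - hd))
  · haveI : NeZero n := ⟨by omega⟩
    have hu : IsUnit (r : ZMod n) := (ZMod.isUnit_iff_coprime r n).mpr hcop
    obtain ⟨u, hu⟩ := hu
    have key : ∀ x y : ZMod n,
        ((u⁻¹ : (ZMod n)ˣ) : ZMod n) * x = ((u⁻¹ : (ZMod n)ˣ) : ZMod n) * y + 1 ↔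
          x = y + (r : ZMod n) := by
      intro x y
      constructor
      · intro h
        have h2 := congrArg (fun z => (u : ZMod n) * z) h
        simp only [mul_add, Units.mul_inv_cancel_left, mul_one] at h2
        rwa [hu] at h2
      · intro h
        rw [h, ← hu, mul_add]
        simp
    refine ⟨⟨Equiv.mk (fun x => ((u⁻¹ : (ZMod n)ˣ) : ZMod n) * x)
        (fun x => (u : ZMod n) * x) (fun x => by simp) (fun x => by simp), ?_⟩⟩
    intro x y
    constructor
    · rintro ⟨hne, hc | hc⟩
      · exact ⟨fun he => hne (by rw [he]), Or.inl ((key x y).mp hc)⟩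
      · exact ⟨fun he => hne (by rw [he]), Or.inr ((key y x).mp hc)⟩
    · rintro ⟨hne, hc | hc⟩
      · exact ⟨fun he => hne ((Units.mul_right_inj u⁻¹).mp he), Or.inl ((key x y).mpr hc)⟩
      · exact ⟨fun he => hne ((Units.mul_right_inj u⁻¹).mp he), Or.inr ((key y x).mpr hc)⟩
  · exact (my_tri n r hn hr3 hrn hcop).mono (by norm_num)
end

section
/- For every n ≥ 8, the cycle Cₙ is not uniquely embeddable: there exist embeddings σ₁, σ₂ of Cₙ in its complement such that Cₙ ⊕ σ₁(Cₙ) contains a clique K₄ while Cₙ ⊕ σ₂(Cₙ) is K₄-free; in particular the two edge-sum graphs are not isomorphic. -/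
open SimpleGraph

namespace CnAux

lemma natnz {n : ℕ} (m : ℕ) (h0 : 0 < m) (h1 : m < n) : ((m : ℕ) : ZMod n) ≠ 0 := by
  rw [Ne, ZMod.natCast_eq_zero_iff]
  intro h; exact absurd (Nat.le_of_dvd h0 h) (by omega)

lemma intnz {n : ℕ} (hn : 8 ≤ n) (k : ℤ) (h0 : k ≠ 0) (h1 : k.natAbs < 8) :
    ((k : ℤ) : ZMod n) ≠ 0 := by
  rw [Ne, ZMod.intCast_zmod_eq_zero_iff_dvd, Int.natCast_dvd]
  intro h
  have h0' : k.natAbs ≠ 0 := Int.natAbs_ne_zero.mpr h0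
  have := Nat.le_of_dvd (by omega) h
  omega

def mulPerm {n : ℕ} (a b : ZMod n) (hab : a * b = 1) : Equiv.Perm (ZMod n) where
  toFun x := a * x
  invFun x := b * x
  left_inv x := by show b * (a * x) = x; rw [← mul_assoc, mul_comm b a, hab, one_mul]
  right_inv x := by show a * (b * x) = x; rw [← mul_assoc, hab, one_mul]

lemma mulPerm_apply {n : ℕ} (a b : ZMod n) (hab : a * b = 1) (x : ZMod n) :
    mulPerm a b hab x = a * x := rfl

lemma edgeSum_mul_adj {n : ℕ} (a b : ZMod n) (hab : a * b = 1) (x y : ZMod n) :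
    (EdgeSum (CycGraph n) (mulPerm a b hab)).Adj x y ↔
      x ≠ y ∧ (x = y + 1 ∨ y = x + 1 ∨ x = y + a ∨ y = x + a) := by
  constructor
  · rintro (⟨hne, h⟩ | ⟨-, u, v, ⟨hne, h⟩, hx, hy⟩)
    · exact ⟨hne, by tauto⟩
    · simp only [Equiv.coe_toEmbedding, mulPerm_apply] at hx hy
      subst hx; subst hy
      refine ⟨fun hc => hne ?_, ?_⟩
      · have := congrArg (b * ·) hc
        simpa [← mul_assoc, mul_comm b a, hab] using this
      · rcases h with h | h
        · subst h; right; right; left; ring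
        · subst h; right; right; right; ring
  · rintro ⟨hne, h | h | h | h⟩
    · exact Or.inl ⟨hne, Or.inl h⟩
    · exact Or.inl ⟨hne, Or.inr h⟩
    · refine Or.inr ⟨hne, b * x, b * y, ⟨?_, Or.inl ?_⟩, ?_, ?_⟩
      · intro hc; exact hne (by
          have := congrArg (a * ·) hc
          simpa [← mul_assoc, hab] using this)
      · rw [h]; ring_nf; rw [mul_comm b a, hab]; ring
      · simp only [Equiv.coe_toEmbedding, mulPerm_apply, ← mul_assoc, hab, one_mul]
      · simp only [Equiv.coe_toEmbedding, mulPerm_apply, ← mul_assoc, hab, one_mul]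
    · refine Or.inr ⟨hne, b * x, b * y, ⟨?_, Or.inr ?_⟩, ?_, ?_⟩
      · intro hc; exact hne (by
          have := congrArg (a * ·) hc
          simpa [← mul_assoc, hab] using this)
      · rw [h]; ring_nf; rw [mul_comm b a, hab]; ring
      · simp only [Equiv.coe_toEmbedding, mulPerm_apply, ← mul_assoc, hab, one_mul]
      · simp only [Equiv.coe_toEmbedding, mulPerm_apply, ← mul_assoc, hab, one_mul]

lemma embedding_mul {n : ℕ} (a b : ZMod n) (hab : a * b = 1)
    (ha1 : a ≠ 1) (ha1' : a + 1 ≠ 0) : IsGraphEmbedding (CycGraph n) (mulPerm a b hab) := by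
  rintro x y ⟨hne, h⟩ ⟨hne2, h2⟩
  simp only [mulPerm_apply] at h2 hne2
  rcases h with h | h <;> subst h <;> rcases h2 with h2 | h2
  · exact ha1 (by linear_combination h2)
  · exact ha1' (by linear_combination -h2)
  · exact ha1' (by linear_combination -h2)
  · exact ha1 (by linear_combination h2)

end CnAux

namespace CnAux2
open CnAux

lemma rel_param {n : ℕ} (a x y : ZMod n)
    (h : x = y + 1 ∨ y = x + 1 ∨ x = y + a ∨ y = x + a) :
    ∃ c₀ c₁ : ℤ, ((c₀ = 1 ∧ c₁ = 0) ∨ (c₀ = -1 ∧ c₁ = 0) ∨ (c₀ = 0 ∧ c₁ = 1) ∨ (c₀ = 0 ∧ c₁ = -1))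
      ∧ y = x + (c₀ : ZMod n) + (c₁ : ZMod n) * a := by
  rcases h with h | h | h | h
  · exact ⟨-1, 0, by norm_num, by push_cast; linear_combination -h⟩
  · exact ⟨1, 0, by norm_num, by push_cast; linear_combination h⟩
  · exact ⟨0, -1, by norm_num, by push_cast; linear_combination -h⟩
  · exact ⟨0, 1, by norm_num, by push_cast; linear_combination h⟩

set_option maxHeartbeats 1600000 in
lemma no_triangle {n : ℕ} (hn : 8 ≤ n) (a : ZMod n)
    (h1 : a ≠ 0) (h2 : a - 1 ≠ 0) (h3 : a + 1 ≠ 0) (h4 : a - 2 ≠ 0) (h5 : a + 2 ≠ 0)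
    (h6 : 2*a ≠ 0) (h7 : 2*a - 1 ≠ 0) (h8 : 2*a + 1 ≠ 0) (h9 : 3*a ≠ 0)
    {x y z : ZMod n}
    (rxy : x = y + 1 ∨ y = x + 1 ∨ x = y + a ∨ y = x + a)
    (rxz : x = z + 1 ∨ z = x + 1 ∨ x = z + a ∨ z = x + a)
    (ryz : y = z + 1 ∨ z = y + 1 ∨ y = z + a ∨ z = y + a) : False := by
  obtain ⟨p₀, p₁, hp, ep⟩ := rel_param a x y rxy
  obtain ⟨q₀, q₁, hq, eq'⟩ := rel_param a x z rxz
  obtain ⟨r₀, r₁, hr, er⟩ := rel_param a y z ryz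
  have key : ((q₀ - p₀ - r₀ : ℤ) : ZMod n) + ((q₁ - p₁ - r₁ : ℤ) : ZMod n) * a = 0 := by
    push_cast; linear_combination ep + er - eq'
  have k1 : (1 : ZMod n) ≠ 0 := by
    have := natnz (n := n) 1 (by norm_num) (by omega); simpa using this
  have k2 : (2 : ZMod n) ≠ 0 := by
    have := natnz (n := n) 2 (by norm_num) (by omega); simpa using this
  have k3 : (3 : ZMod n) ≠ 0 := by
    have := natnz (n := n) 3 (by norm_num) (by omega); simpa using this
  rcases hp with ⟨rfl, rfl⟩ | ⟨rfl, rfl⟩ | ⟨rfl, rfl⟩ | ⟨rfl, rfl⟩ <;>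
    rcases hq with ⟨rfl, rfl⟩ | ⟨rfl, rfl⟩ | ⟨rfl, rfl⟩ | ⟨rfl, rfl⟩ <;>
      rcases hr with ⟨rfl, rfl⟩ | ⟨rfl, rfl⟩ | ⟨rfl, rfl⟩ | ⟨rfl, rfl⟩ <;>
        push_cast at key <;>
          first
          | exact k1 (by linear_combination key)
          | exact k1 (by linear_combination -key)
          | exact k2 (by linear_combination key)
          | exact k2 (by linear_combination -key)
          | exact k3 (by linear_combination key)
          | exact k3 (by linear_combination -key)
          | exact h1 (by linear_combination key)
          | exact h1 (by linear_combination -key)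
          | exact h2 (by linear_combination key)
          | exact h2 (by linear_combination -key)
          | exact h3 (by linear_combination key)
          | exact h3 (by linear_combination -key)
          | exact h4 (by linear_combination key)
          | exact h4 (by linear_combination -key)
          | exact h5 (by linear_combination key)
          | exact h5 (by linear_combination -key)
          | exact h6 (by linear_combination key)
          | exact h6 (by linear_combination -key)
          | exact h7 (by linear_combination key)
          | exact h7 (by linear_combination -key)
          | exact h8 (by linear_combination key)
          | exact h8 (by linear_combination -key)
          | exact h9 (by linear_combination key)
          | exact h9 (by linear_combination -key)

lemma cliqueFree_even {n : ℕ} (hn : 8 ≤ n) (a b : ZMod n) (hab : a * b = 1)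
    (h1 : a ≠ 0) (h2 : a - 1 ≠ 0) (h3 : a + 1 ≠ 0) (h4 : a - 2 ≠ 0) (h5 : a + 2 ≠ 0)
    (h6 : 2*a ≠ 0) (h7 : 2*a - 1 ≠ 0) (h8 : 2*a + 1 ≠ 0) (h9 : 3*a ≠ 0) :
    (EdgeSum (CycGraph n) (mulPerm a b hab)).CliqueFree 4 := by
  have hfree3 : (EdgeSum (CycGraph n) (mulPerm a b hab)).CliqueFree 3 := by
    intro s hs
    obtain ⟨x, y, z, hxy, hxz, hyz, rfl⟩ := Finset.card_eq_three.mp hs.2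
    have axy := (edgeSum_mul_adj a b hab x y).mp (hs.1 (by simp) (by simp) hxy)
    have axz := (edgeSum_mul_adj a b hab x z).mp (hs.1 (by simp) (by simp) hxz)
    have ayz := (edgeSum_mul_adj a b hab y z).mp (hs.1 (by simp) (by simp) hyz)
    exact no_triangle hn a h1 h2 h3 h4 h5 h6 h7 h8 h9 axy.2 axz.2 ayz.2
  exact hfree3.mono (by norm_num)

end CnAux2

namespace CnAux3
open CnAux

lemma rel_param2 {n : ℕ} (hn : 8 ≤ n) {x y : ZMod n}
    (h : x = y + 1 ∨ y = x + 1 ∨ x = y + 2 ∨ y = x + 2) (hne : x ≠ y) :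
    ∃ k : ℤ, (k = 1 ∨ k = -1 ∨ k = 2 ∨ k = -2) ∧ y = x + (k : ZMod n) := by
  rcases h with h | h | h | h
  · exact ⟨-1, by norm_num, by push_cast; linear_combination -h⟩
  · exact ⟨1, by norm_num, by push_cast; linear_combination h⟩
  · exact ⟨-2, by norm_num, by push_cast; linear_combination -h⟩
  · exact ⟨2, by norm_num, by push_cast; linear_combination h⟩

/-- From a ZMod-equation between two small integer constants, get the ℤ equation. -/
lemma int_eq_of_zmod_eq {n : ℕ} (hn : 8 ≤ n) (k l : ℤ) (hk : k.natAbs ≤ 3) (hl : l.natAbs ≤ 4)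
    (h : ((k : ℤ) : ZMod n) = ((l : ℤ) : ZMod n)) : k = l := by
  by_contra hne
  have h0 : ((k - l : ℤ) : ZMod n) = 0 := by push_cast; linear_combination h
  exact intnz hn (k - l) (by omega) (by omega) h0

lemma consis {n : ℕ} (hn : 8 ≤ n) {u v w' : ZMod n} {p q r : ℤ}
    (mp : p = 1 ∨ p = -1 ∨ p = 2 ∨ p = -2)
    (mq : q = 1 ∨ q = -1 ∨ q = 2 ∨ q = -2)
    (mr : r = 1 ∨ r = -1 ∨ r = 2 ∨ r = -2)
    (ep : v = u + (p : ZMod n)) (eq' : w' = u + (q : ZMod n)) (er : w' = v + (r : ZMod n)) :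
    q = p + r := by
  have h' : ((q : ℤ) : ZMod n) = ((p + r : ℤ) : ZMod n) := by
    push_cast; linear_combination ep + er - eq'
  have := int_eq_of_zmod_eq hn q (p+r) (by omega) (by omega) h'
  omega

lemma K4int (k1 k2 k3 k4 k5 k6 : ℤ)
    (m1 : k1 = 1 ∨ k1 = -1 ∨ k1 = 2 ∨ k1 = -2)
    (m2 : k2 = 1 ∨ k2 = -1 ∨ k2 = 2 ∨ k2 = -2)
    (m3 : k3 = 1 ∨ k3 = -1 ∨ k3 = 2 ∨ k3 = -2)
    (m4 : k4 = 1 ∨ k4 = -1 ∨ k4 = 2 ∨ k4 = -2)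
    (m5 : k5 = 1 ∨ k5 = -1 ∨ k5 = 2 ∨ k5 = -2)
    (m6 : k6 = 1 ∨ k6 = -1 ∨ k6 = 2 ∨ k6 = -2)
    (c1 : k2 = k1 + k4) (c2 : k3 = k1 + k5) (c3 : k3 = k2 + k6) : False := by omega

lemma no_K4_two {n : ℕ} (hn : 8 ≤ n) {w x y z : ZMod n}
    (hwx : w ≠ x) (hwy : w ≠ y) (hwz : w ≠ z) (hxy : x ≠ y) (hxz : x ≠ z) (hyz : y ≠ z)
    (rwx : w = x + 1 ∨ x = w + 1 ∨ w = x + 2 ∨ x = w + 2)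
    (rwy : w = y + 1 ∨ y = w + 1 ∨ w = y + 2 ∨ y = w + 2)
    (rwz : w = z + 1 ∨ z = w + 1 ∨ w = z + 2 ∨ z = w + 2)
    (rxy : x = y + 1 ∨ y = x + 1 ∨ x = y + 2 ∨ y = x + 2)
    (rxz : x = z + 1 ∨ z = x + 1 ∨ x = z + 2 ∨ z = x + 2)
    (ryz : y = z + 1 ∨ z = y + 1 ∨ y = z + 2 ∨ z = y + 2) : False := by
  obtain ⟨k1, m1, e1⟩ := rel_param2 hn rwx hwx
  obtain ⟨k2, m2, e2⟩ := rel_param2 hn rwy hwy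
  obtain ⟨k3, m3, e3⟩ := rel_param2 hn rwz hwz
  obtain ⟨k4, m4, e4⟩ := rel_param2 hn rxy hxy
  obtain ⟨k5, m5, e5⟩ := rel_param2 hn rxz hxz
  obtain ⟨k6, m6, e6⟩ := rel_param2 hn ryz hyz
  exact K4int k1 k2 k3 k4 k5 k6 m1 m2 m3 m4 m5 m6
    (consis hn m1 m2 m4 e1 e2 e4) (consis hn m1 m3 m5 e1 e3 e5) (consis hn m2 m3 m6 e2 e3 e6)

lemma cliqueFree_two {n : ℕ} (hn : 8 ≤ n) (b : ZMod n) (hab : (2 : ZMod n) * b = 1) :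
    (EdgeSum (CycGraph n) (mulPerm 2 b hab)).CliqueFree 4 := by
  intro s hs
  have hcard := hs.2
  have hpos : 0 < s.card := by omega
  obtain ⟨w, hw⟩ := Finset.card_pos.mp hpos
  have hcard3 : (s.erase w).card = 3 := by
    rw [Finset.card_erase_of_mem hw, hcard]
  obtain ⟨x, y, z, hxy, hxz, hyz, hexyz⟩ := Finset.card_eq_three.mp hcard3
  have hx : x ∈ s.erase w := by rw [hexyz]; simp
  have hy : y ∈ s.erase w := by rw [hexyz]; simp
  have hz : z ∈ s.erase w := by rw [hexyz]; simp
  have hwx : w ≠ x := (Finset.ne_of_mem_erase hx).symm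
  have hwy : w ≠ y := (Finset.ne_of_mem_erase hy).symm
  have hwz : w ≠ z := (Finset.ne_of_mem_erase hz).symm
  have adj : ∀ u v, u ∈ s → v ∈ s → u ≠ v →
      (u = v + 1 ∨ v = u + 1 ∨ u = v + 2 ∨ v = u + 2) := by
    intro u v hu hv huv
    have := (edgeSum_mul_adj 2 b hab u v).mp (hs.1 hu hv huv)
    exact this.2
  have hx' := Finset.mem_of_mem_erase hx
  have hy' := Finset.mem_of_mem_erase hy
  have hz' := Finset.mem_of_mem_erase hz
  exact no_K4_two hn hwx hwy hwz hxy hxz hyz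
    (adj w x hw hx' hwx) (adj w y hw hy' hwy) (adj w z hw hz' hwz)
    (adj x y hx' hy' hxy) (adj x z hx' hz' hxz) (adj y z hy' hz' hyz)

end CnAux3

namespace CnAux4
open CnAux

def gseq (n v : ℕ) : ℕ :=
  if v = 0 then 2 else if v = 1 then 0 else if v = 2 then 3 else if v = 3 then 1
  else if v < 4 + (n-4)/2 then 2*v - 3 else 2*(v - (4 + (n-4)/2)) + 4

lemma g_lt {n v : ℕ} (hn : 8 ≤ n) (hv : v < n) : gseq n v < n := by
  simp only [gseq]; split_ifs <;> omega

lemma g_inj {n v w : ℕ} (hn : 8 ≤ n) (hv : v < n) (hw : w < n)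
    (h : gseq n v = gseq n w) : v = w := by
  simp only [gseq] at h; split_ifs at h <;> omega

def sfun (n : ℕ) : ZMod n → ZMod n := fun i => ((gseq n i.val : ℕ) : ZMod n)

lemma sfun_bij {n : ℕ} [NeZero n] (hn : 8 ≤ n) : Function.Bijective (sfun n) := by
  rw [← Finite.injective_iff_bijective]
  intro i j h
  have hi := ZMod.val_lt i
  have hj := ZMod.val_lt j
  have h2 : (((gseq n i.val : ℕ) : ZMod n)).val = (((gseq n j.val : ℕ) : ZMod n)).val :=
    congrArg ZMod.val h
  rw [ZMod.val_cast_of_lt (g_lt hn hi), ZMod.val_cast_of_lt (g_lt hn hj)] at h2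
  exact ZMod.val_injective n (g_inj hn hi hj h2)

lemma castsub {n : ℕ} (j : ℕ) (h : j ≤ n) : ((n - j : ℕ) : ZMod n) = - (j : ZMod n) := by
  rw [Nat.cast_sub h, ZMod.natCast_self]; ring

lemma sfun_diff {n : ℕ} [NeZero n] (hn : 8 ≤ n) (x : ZMod n) :
    ∃ d : ℤ, (d = 2 ∨ d = -2 ∨ d = 3 ∨ d = 4 ∨ d = 5 ∨ d = 6) ∧
      sfun n (x + 1) = sfun n x + (d : ZMod n) := by
  haveI : Fact (1 < n) := ⟨by omega⟩
  have hvlt : x.val < n := ZMod.val_lt x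
  have hval1 : (x + 1).val = (x.val + 1) % n := by rw [ZMod.val_add, ZMod.val_one]
  show ∃ d : ℤ, _ ∧ ((gseq n ((x+1).val) : ℕ) : ZMod n) = ((gseq n x.val : ℕ) : ZMod n) + (d : ZMod n)
  rw [hval1]
  clear hval1
  revert hvlt
  generalize x.val = v
  intro hvlt
  have hk6 : 6 ≤ 4 + (n-4)/2 := by omega
  have hkn : 4 + (n-4)/2 ≤ n - 1 := by omega
  by_cases hlast : v = n - 1
  · -- wrap around
    subst hlast
    rw [show (n - 1 + 1) % n = 0 from by rw [Nat.sub_add_cancel (by omega), Nat.mod_self]]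
    have hge : gseq n (n-1) = 2*((n-1) - (4 + (n-4)/2)) + 4 := by
      have h1 : ¬ (n-1 < 4 + (n-4)/2) := by omega
      have h2 : n-1 ≠ 0 := by omega
      have h3 : n-1 ≠ 1 := by omega
      have h4 : n-1 ≠ 2 := by omega
      have h5 : n-1 ≠ 3 := by omega
      simp [gseq, h1, h2, h3, h4, h5]
    have hg0 : gseq n 0 = 2 := by simp [gseq]
    rw [hge, hg0]
    have hpar : 2*((n-1) - (4 + (n-4)/2)) + 4 = n - 2 ∨ 2*((n-1) - (4 + (n-4)/2)) + 4 = n - 1 := by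
      omega
    rcases hpar with hp | hp
    · refine ⟨4, by norm_num, ?_⟩
      rw [hp, castsub 2 (by omega)]; push_cast; ring
    · refine ⟨3, by norm_num, ?_⟩
      rw [hp, castsub 1 (by omega)]; push_cast; ring
  · have hv1 : v + 1 < n := by omega
    rw [Nat.mod_eq_of_lt hv1]
    rcases Nat.lt_or_ge v 4 with h4 | h4
    · interval_cases v
      · exact ⟨-2, by norm_num, by norm_num [gseq]⟩
      · exact ⟨3, by norm_num, by norm_num [gseq]⟩
      · exact ⟨-2, by norm_num, by norm_num [gseq]⟩
      · refine ⟨4, by norm_num, ?_⟩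
        have h34 : gseq n 4 = 5 := by
          have : 4 < 4 + (n-4)/2 := by omega
          simp [gseq, this]
        have h33 : gseq n 3 = 1 := by simp [gseq]
        rw [h34, h33]; push_cast; ring
    · have hb0 : v ≠ 0 := by omega
      have hb1 : v ≠ 1 := by omega
      have hb2 : v ≠ 2 := by omega
      have hb3 : v ≠ 3 := by omega
      have hc0 : v + 1 ≠ 0 := by omega
      have hc1 : v + 1 ≠ 1 := by omega
      have hc2 : v + 1 ≠ 2 := by omega
      have hc3 : v + 1 ≠ 3 := by omega
      rcases Nat.lt_or_ge (v+1) (4 + (n-4)/2) with hb | hb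
      · -- both odd branch
        have e1 : gseq n v = 2*v - 3 := by
          have : v < 4 + (n-4)/2 := by omega
          simp [gseq, hb0, hb1, hb2, hb3, this]
        have e2 : gseq n (v+1) = 2*(v+1) - 3 := by
          simp [gseq, hb0, hc0, hc1, hc2, hc3, hb]
        rw [e1, e2, show 2*(v+1) - 3 = (2*v - 3) + 2 from by omega]
        exact ⟨2, by norm_num, by push_cast; ring⟩
      · have hbneg : ¬ (v + 1 < 4 + (n-4)/2) := by omega
        have e2 : gseq n (v+1) = 2*((v+1) - (4 + (n-4)/2)) + 4 := by
          simp [gseq, hb0, hc0, hc1, hc2, hc3, hbneg]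
        rcases Nat.lt_or_ge v (4 + (n-4)/2) with hc | hc
        · -- glue: v = k - 1
          have e1 : gseq n v = 2*v - 3 := by
            simp [gseq, hb0, hb1, hb2, hb3, hc]
          rw [e1, e2, show 2*((v+1) - (4 + (n-4)/2)) + 4 = 4 from by omega]
          have hpar : 2*v - 3 = n - 1 ∨ 2*v - 3 = n - 2 := by omega
          rcases hpar with hp | hp
          · refine ⟨5, by norm_num, ?_⟩
            rw [hp, castsub 1 (by omega)]; push_cast; ring
          · refine ⟨6, by norm_num, ?_⟩
            rw [hp, castsub 2 (by omega)]; push_cast; ring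
        · -- both even branch
          have hcneg : ¬ (v < 4 + (n-4)/2) := by omega
          have e1 : gseq n v = 2*(v - (4 + (n-4)/2)) + 4 := by
            simp [gseq, hb0, hb1, hb2, hb3, hcneg]
          rw [e1, e2,
            show 2*((v+1) - (4 + (n-4)/2)) + 4 = (2*(v - (4 + (n-4)/2)) + 4) + 2 from by omega]
          exact ⟨2, by norm_num, by push_cast; ring⟩

lemma notadj_sfun {n : ℕ} [NeZero n] (hn : 8 ≤ n) (u : ZMod n) :
    ¬ (CycGraph n).Adj (sfun n u) (sfun n (u + 1)) := by
  rintro ⟨hne2, h2⟩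
  obtain ⟨d, m, e⟩ := sfun_diff hn u
  rcases h2 with h2 | h2
  · exact intnz hn (d + 1) (by omega) (by omega) (by push_cast; linear_combination - e - h2)
  · exact intnz hn (d - 1) (by omega) (by omega) (by push_cast; linear_combination h2 - e)

end CnAux4

namespace CnAux5
open CnAux CnAux4

noncomputable def sigma1 (n : ℕ) [NeZero n] (hn : 8 ≤ n) : Equiv.Perm (ZMod n) :=
  Equiv.ofBijective (sfun n) (sfun_bij hn)

lemma sigma1_apply {n : ℕ} [NeZero n] (hn : 8 ≤ n) (x : ZMod n) :
    sigma1 n hn x = sfun n x := rfl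

lemma embedding1 {n : ℕ} [NeZero n] (hn : 8 ≤ n) :
    IsGraphEmbedding (CycGraph n) (sigma1 n hn) := by
  rintro x y ⟨hne, hxy | hxy⟩ hadj
  · rw [hxy] at hadj
    exact notadj_sfun hn y (hadj.symm)
  · rw [hxy] at hadj
    exact notadj_sfun hn x hadj

lemma sfun_vals {n : ℕ} [NeZero n] (hn : 8 ≤ n) :
    sfun n 0 = 2 ∧ sfun n 1 = 0 ∧ sfun n 2 = 3 ∧ sfun n 3 = 1 := by
  haveI : Fact (1 < n) := ⟨by omega⟩
  have v0 : (0 : ZMod n).val = 0 := ZMod.val_zero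
  have v1 : (1 : ZMod n).val = 1 := ZMod.val_one n
  have v2 : (2 : ZMod n).val = 2 := by
    have : ((2 : ℕ) : ZMod n) = (2 : ZMod n) := by norm_cast
    rw [← this, ZMod.val_cast_of_lt (by omega)]
  have v3 : (3 : ZMod n).val = 3 := by
    have : ((3 : ℕ) : ZMod n) = (3 : ZMod n) := by norm_cast
    rw [← this, ZMod.val_cast_of_lt (by omega)]
  refine ⟨?_, ?_, ?_, ?_⟩ <;> simp [sfun, v0, v1, v2, v3, gseq] <;> norm_num

lemma clique1 {n : ℕ} [NeZero n] (hn : 8 ≤ n) :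
    (EdgeSum (CycGraph n) (sigma1 n hn)).IsNClique 4 ({0, 1, 2, 3} : Finset (ZMod n)) := by
  obtain ⟨s0, s1, s2, s3⟩ := sfun_vals (n := n) hn
  have k1 : ((1:ℕ) : ZMod n) ≠ 0 := natnz 1 (by norm_num) (by omega)
  have k2 : ((2:ℕ) : ZMod n) ≠ 0 := natnz 2 (by norm_num) (by omega)
  have k3 : ((3:ℕ) : ZMod n) ≠ 0 := natnz 3 (by norm_num) (by omega)
  push_cast at k1 k2 k3
  have d01 : (0 : ZMod n) ≠ 1 := fun h => k1 (by linear_combination -h)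
  have d02 : (0 : ZMod n) ≠ 2 := fun h => k2 (by linear_combination -h)
  have d03 : (0 : ZMod n) ≠ 3 := fun h => k3 (by linear_combination -h)
  have d12 : (1 : ZMod n) ≠ 2 := fun h => k1 (by linear_combination -h)
  have d13 : (1 : ZMod n) ≠ 3 := fun h => k2 (by linear_combination -h)
  have d23 : (2 : ZMod n) ≠ 3 := fun h => k1 (by linear_combination -h)
  -- adjacency facts
  have a01 : (EdgeSum (CycGraph n) (sigma1 n hn)).Adj 0 1 :=
    Or.inl ⟨d01, Or.inr (by rw [zero_add])⟩
  have a12 : (EdgeSum (CycGraph n) (sigma1 n hn)).Adj 1 2 :=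
    Or.inl ⟨d12, Or.inr (by norm_num)⟩
  have a23 : (EdgeSum (CycGraph n) (sigma1 n hn)).Adj 2 3 :=
    Or.inl ⟨d23, Or.inr (by norm_num)⟩
  have a02 : (EdgeSum (CycGraph n) (sigma1 n hn)).Adj 0 2 :=
    Or.inr ⟨d02, 1, 0, ⟨d01.symm, Or.inl (by rw [zero_add])⟩, s1, s0⟩
  have a03 : (EdgeSum (CycGraph n) (sigma1 n hn)).Adj 0 3 :=
    Or.inr ⟨d03, 1, 2, ⟨d12, Or.inr (by norm_num)⟩, s1, s2⟩
  have a13 : (EdgeSum (CycGraph n) (sigma1 n hn)).Adj 1 3 :=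
    Or.inr ⟨d13, 3, 2, ⟨d23.symm, Or.inl (by norm_num)⟩, s3, s2⟩
  constructor
  · intro u hu v hv huv
    simp only [Finset.coe_insert, Set.mem_insert_iff, Finset.coe_singleton,
      Set.mem_singleton_iff] at hu hv
    rcases hu with rfl | rfl | rfl | rfl <;> rcases hv with rfl | rfl | rfl | rfl <;>
      first
        | exact absurd rfl huv
        | exact a01 | exact a02 | exact a03 | exact a12 | exact a13 | exact a23
        | exact a01.symm | exact a02.symm | exact a03.symm
        | exact a12.symm | exact a13.symm | exact a23.symm
  · rw [Finset.card_insert_of_notMem (by simp [d01, d02, d03]),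
      Finset.card_insert_of_notMem (by simp [d12, d13]),
      Finset.card_insert_of_notMem (by simp [d23]),
      Finset.card_singleton]

end CnAux5

namespace CnAux6
open CnAux

lemma noniso {V W : Type*} {G : SimpleGraph V} {H : SimpleGraph W}
    (hG : ∃ s : Finset V, G.IsNClique 4 s) (hH : H.CliqueFree 4) :
    ¬ Nonempty (G ≃g H) := by
  classical
  rintro ⟨e⟩
  obtain ⟨s, hs⟩ := hG
  apply hH (s.image e)
  constructor
  · rintro u hu v hv huv
    simp only [Finset.coe_image, Set.mem_image, Finset.mem_coe] at hu hv
    obtain ⟨x, hx, rfl⟩ := hu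
    obtain ⟨y, hy, rfl⟩ := hv
    have hxy : x ≠ y := fun h => huv (by rw [h])
    exact e.map_rel_iff.mpr (hs.1 hx hy hxy)
  · rw [Finset.card_image_of_injective _ e.injective]
    exact hs.2

end CnAux6

namespace CnAux7
open CnAux CnAux2 CnAux3

lemma two_not_unit {n : ℕ} [NeZero n] (he : 2 ∣ n) (a : ZMod n) (h : (2 : ZMod n) * a = 1) :
    False := by
  have hu : IsUnit (2 : ZMod n) := IsUnit.of_mul_eq_one _ h
  have h2 : ((2 : ℕ) : ZMod n) = (2 : ZMod n) := by norm_cast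
  rw [← h2] at hu
  have hcop := (ZMod.isUnit_iff_coprime 2 n).mp hu
  have : (2 : ℕ) ∣ 1 := hcop ▸ Nat.dvd_gcd dvd_rfl he
  omega

lemma sigma2_exists {n : ℕ} [NeZero n] (hn : 8 ≤ n) :
    ∃ σ₂ : Equiv.Perm (ZMod n), IsGraphEmbedding (CycGraph n) σ₂ ∧
      (EdgeSum (CycGraph n) σ₂).CliqueFree 4 := by
  have k1 : (1 : ZMod n) ≠ 0 := by
    have := natnz (n := n) 1 (by norm_num) (by omega); simpa using this
  have k2 : (2 : ZMod n) ≠ 0 := by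
    have := natnz (n := n) 2 (by norm_num) (by omega); simpa using this
  have k3 : (3 : ZMod n) ≠ 0 := by
    have := natnz (n := n) 3 (by norm_num) (by omega); simpa using this
  rcases Nat.even_or_odd n with he | ho
  · -- even case
    have he2 : 2 ∣ n := he.two_dvd
    obtain ⟨m, hm3, hm3', hcop⟩ : ∃ m, 3 ≤ m ∧ m + 3 ≤ n ∧ Nat.Coprime m n := by
      obtain ⟨t, ht⟩ := he2
      by_cases h4 : 4 ∣ n
      · refine ⟨n/2 - 1, by omega, by omega, ?_⟩
        have hodd : Odd (n/2 - 1) := Nat.odd_iff.mpr (by omega)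
        have c2 : Nat.Coprime (n/2 - 1) 2 := Nat.coprime_two_right.mpr hodd
        have ch : Nat.Coprime (n/2 - 1) (n/2) := by
          have hh : (n/2 - 1) + 1 = n/2 := by omega
          have := (Nat.coprime_self_add_right (m := n/2 - 1) (n := 1)).mpr
            (Nat.coprime_one_right _)
          rwa [hh] at this
        have hmul := c2.mul_right ch
        have hn2 : 2 * (n/2) = n := by omega
        rwa [hn2] at hmul
      · refine ⟨n/2 - 2, by omega, by omega, ?_⟩
        have hodd : Odd (n/2 - 2) := Nat.odd_iff.mpr (by omega)
        have c2 : Nat.Coprime (n/2 - 2) 2 := Nat.coprime_two_right.mpr hodd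
        have ch : Nat.Coprime (n/2 - 2) (n/2) := by
          have hh : (n/2 - 2) + 2 = n/2 := by omega
          have := (Nat.coprime_self_add_right (m := n/2 - 2) (n := 2)).mpr c2
          rwa [hh] at this
        have hmul := c2.mul_right ch
        have hn2 : 2 * (n/2) = n := by omega
        rwa [hn2] at hmul
    obtain ⟨u, hu⟩ := (ZMod.isUnit_iff_coprime m n).mpr hcop
    have hab : ((m : ℕ) : ZMod n) * ((u⁻¹ : (ZMod n)ˣ) : ZMod n) = 1 := by
      rw [← hu]; exact_mod_cast u.mul_inv
    set a : ZMod n := ((m : ℕ) : ZMod n) with ha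
    -- the nonzero facts
    have f1 : a ≠ 0 := by rw [ha]; exact natnz m (by omega) (by omega)
    have f2 : a - 1 ≠ 0 := by
      have := natnz (n := n) (m - 1) (by omega) (by omega)
      rw [Nat.cast_sub (by omega)] at this
      intro h; apply this; rw [← h, ha]; push_cast; ring
    have f3 : a + 1 ≠ 0 := by
      have := natnz (n := n) (m + 1) (by omega) (by omega)
      intro h; apply this; rw [ha] at h; push_cast; linear_combination h
    have f4 : a - 2 ≠ 0 := by
      have := natnz (n := n) (m - 2) (by omega) (by omega)
      rw [Nat.cast_sub (by omega)] at this
      intro h; apply this; rw [← h, ha]; push_cast; ring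
    have f5 : a + 2 ≠ 0 := by
      have := natnz (n := n) (m + 2) (by omega) (by omega)
      intro h; apply this; rw [ha] at h; push_cast; linear_combination h
    have f6 : 2 * a ≠ 0 := by
      intro h; apply k2
      calc (2 : ZMod n) = 2 * a * ((u⁻¹ : (ZMod n)ˣ) : ZMod n) := by
            rw [mul_assoc, hab, mul_one]
        _ = 0 := by rw [h, zero_mul]
    have f7 : 2 * a - 1 ≠ 0 := by
      intro h
      exact two_not_unit he2 a (by linear_combination h)
    have f8 : 2 * a + 1 ≠ 0 := by
      intro h
      exact two_not_unit he2 (-a) (by linear_combination -h)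
    have f9 : 3 * a ≠ 0 := by
      intro h; apply k3
      calc (3 : ZMod n) = 3 * a * ((u⁻¹ : (ZMod n)ˣ) : ZMod n) := by
            rw [mul_assoc, hab, mul_one]
        _ = 0 := by rw [h, zero_mul]
    refine ⟨mulPerm a _ hab, embedding_mul a _ hab ?_ f3, ?_⟩
    · intro h; exact f2 (by rw [h]; ring)
    · exact cliqueFree_even hn a _ hab f1 f2 f3 f4 f5 f6 f7 f8 f9
  · -- odd case
    have ho' : n % 2 = 1 := Nat.odd_iff.mp ho
    have h2 : 2 * ((n+1)/2) = n + 1 := by omega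
    have hab : (2 : ZMod n) * ((((n+1)/2 : ℕ)) : ZMod n) = 1 := by
      have h3 : (((2 * ((n+1)/2)) : ℕ) : ZMod n) = ((n+1 : ℕ) : ZMod n) := by rw [h2]
      push_cast at h3
      rw [ZMod.natCast_self] at h3
      simpa using h3
    refine ⟨mulPerm 2 _ hab, embedding_mul 2 _ hab ?_ ?_, cliqueFree_two hn _ hab⟩
    · intro h; exact k1 (by linear_combination h)
    · intro h; exact k3 (by linear_combination h)

end CnAux7

/-- For every `n ≥ 8`, `Cₙ` is not uniquely embeddable: there are embeddings `σ₁, σ₂` such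
that `Cₙ ⊕ σ₁(Cₙ)` contains a `K₄` while `Cₙ ⊕ σ₂(Cₙ)` is `K₄`-free; in particular the two
edge-sums are not isomorphic. -/
theorem cn_not_uniquely_embeddable (n : ℕ) (hn : 8 ≤ n) :
    ∃ σ₁ σ₂ : Equiv.Perm (ZMod n),
      IsGraphEmbedding (CycGraph n) σ₁ ∧ IsGraphEmbedding (CycGraph n) σ₂ ∧
      (∃ s : Finset (ZMod n), (EdgeSum (CycGraph n) σ₁).IsNClique 4 s) ∧
      (EdgeSum (CycGraph n) σ₂).CliqueFree 4 ∧
      ¬ Nonempty (EdgeSum (CycGraph n) σ₁ ≃g EdgeSum (CycGraph n) σ₂) := by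
  haveI : NeZero n := ⟨by omega⟩
  obtain ⟨σ₂, hemb2, hfree2⟩ := CnAux7.sigma2_exists hn
  exact ⟨CnAux5.sigma1 n hn, σ₂, CnAux5.embedding1 hn, hemb2,
    ⟨{0, 1, 2, 3}, CnAux5.clique1 hn⟩, hfree2,
    CnAux6.noniso ⟨_, CnAux5.clique1 hn⟩ hfree2⟩
end

section
/- Let G be a graph and let a₁, a₂, a₃, a₄ be four vertices of G inducing a path in G such that a₁ and a₄ each have exactly one neighbor outside {a₁,a₂,a₃,a₄}, and a₂, a₃ have no neighbors outside this set. If the graph G' obtained from G by deleting these four vertices admits an embedding in its complement, then G admits an embedding σ in its complement such that G ⊕ σ(G) contains a clique on the four vertices a₁, a₂, a₃, a₄. -/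
open SimpleGraph

/-- If `a₁,a₂,a₃,a₄` induce a path in `G`, with `a₁, a₄` each having exactly one neighbor
outside `{a₁,a₂,a₃,a₄}` and `a₂, a₃` having none, and if `G` minus these four vertices is
embeddable in its complement, then `G` has an embedding `σ` such that `G ⊕ σ(G)` contains
the clique `{a₁,a₂,a₃,a₄}`. -/
theorem packing_with_K4_of_removed_path {V : Type*} (G : SimpleGraph V)
    (a₁ a₂ a₃ a₄ : V) (S : Set V) (hS : S = {a₁, a₂, a₃, a₄})
    (hnd : ([a₁, a₂, a₃, a₄] : List V).Nodup)
    (h12 : G.Adj a₁ a₂) (h23 : G.Adj a₂ a₃) (h34 : G.Adj a₃ a₄)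
    (h13 : ¬ G.Adj a₁ a₃) (h14 : ¬ G.Adj a₁ a₄) (h24 : ¬ G.Adj a₂ a₄)
    (h1out : ∃! w, w ∉ S ∧ G.Adj a₁ w)
    (h4out : ∃! w, w ∉ S ∧ G.Adj a₄ w)
    (h2out : ∀ w ∉ S, ¬ G.Adj a₂ w)
    (h3out : ∀ w ∉ S, ¬ G.Adj a₃ w)
    (hemb : ∃ σ' : Equiv.Perm ↥(Sᶜ), IsGraphEmbedding (G.induce Sᶜ) σ') :
    ∃ σ : Equiv.Perm V, IsGraphEmbedding G σ ∧ (EdgeSum G σ).IsClique S := by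
  classical
  obtain ⟨σ', hσ'⟩ := hemb
  have n12 : a₁ ≠ a₂ := by intro h; simp [h] at hnd
  have n13 : a₁ ≠ a₃ := by intro h; simp [h] at hnd
  have n14 : a₁ ≠ a₄ := by intro h; simp [h] at hnd
  have n23 : a₂ ≠ a₃ := by intro h; simp [h] at hnd
  have n24 : a₂ ≠ a₄ := by intro h; simp [h] at hnd
  have n34 : a₃ ≠ a₄ := by intro h; simp [h] at hnd
  have mem1 : a₁ ∈ S := by rw [hS]; simp
  have mem2 : a₂ ∈ S := by rw [hS]; simp
  have mem3 : a₃ ∈ S := by rw [hS]; simp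
  have mem4 : a₄ ∈ S := by rw [hS]; simp
  -- permutation on the subtype S
  have memS : ∀ v : V, v ∈ S → v = a₁ ∨ v = a₂ ∨ v = a₃ ∨ v = a₄ := by
    intro v hv; rw [hS] at hv; simpa using hv
  let f : {v // v ∈ S} → {v // v ∈ S} := fun x =>
    if x.1 = a₁ then ⟨a₃, mem3⟩ else if x.1 = a₂ then ⟨a₁, mem1⟩
    else if x.1 = a₃ then ⟨a₄, mem4⟩ else ⟨a₂, mem2⟩
  let g : {v // v ∈ S} → {v // v ∈ S} := fun x =>
    if x.1 = a₃ then ⟨a₁, mem1⟩ else if x.1 = a₁ then ⟨a₂, mem2⟩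
    else if x.1 = a₄ then ⟨a₃, mem3⟩ else ⟨a₄, mem4⟩
  have fa1 : ∀ h, f ⟨a₁, h⟩ = ⟨a₃, mem3⟩ := fun _ => if_pos rfl
  have fa2 : ∀ h, f ⟨a₂, h⟩ = ⟨a₁, mem1⟩ := fun _ =>
    (if_neg fun h' => n12 h'.symm).trans (if_pos rfl)
  have fa3 : ∀ h, f ⟨a₃, h⟩ = ⟨a₄, mem4⟩ := fun _ =>
    (if_neg fun h' => n13 h'.symm).trans ((if_neg fun h' => n23 h'.symm).trans (if_pos rfl))
  have fa4 : ∀ h, f ⟨a₄, h⟩ = ⟨a₂, mem2⟩ := fun _ =>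
    (if_neg fun h' => n14 h'.symm).trans ((if_neg fun h' => n24 h'.symm).trans
      (if_neg fun h' => n34 h'.symm))
  have ga1 : ∀ h, g ⟨a₁, h⟩ = ⟨a₂, mem2⟩ := fun _ =>
    (if_neg fun h' => n13 h').trans (if_pos rfl)
  have ga2 : ∀ h, g ⟨a₂, h⟩ = ⟨a₄, mem4⟩ := fun _ =>
    (if_neg fun h' => n23 h').trans ((if_neg fun h' => n12 h'.symm).trans
      (if_neg fun h' => n24 h'))
  have ga3 : ∀ h, g ⟨a₃, h⟩ = ⟨a₁, mem1⟩ := fun _ => if_pos rfl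
  have ga4 : ∀ h, g ⟨a₄, h⟩ = ⟨a₃, mem3⟩ := fun _ =>
    (if_neg fun h' => n34 h'.symm).trans ((if_neg fun h' => n14 h'.symm).trans (if_pos rfl))
  have hgf : ∀ x, g (f x) = x := by
    rintro ⟨v, hv⟩
    rcases memS v hv with rfl | rfl | rfl | rfl
    · rw [fa1 hv, ga3 mem3]
    · rw [fa2 hv, ga1 mem1]
    · rw [fa3 hv, ga4 mem4]
    · rw [fa4 hv, ga2 mem2]
  have hfg : ∀ x, f (g x) = x := by
    rintro ⟨v, hv⟩
    rcases memS v hv with rfl | rfl | rfl | rfl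
    · rw [ga1 hv, fa2 mem2]
    · rw [ga2 hv, fa4 mem4]
    · rw [ga3 hv, fa1 mem1]
    · rw [ga4 hv, fa3 mem3]
  let ep : Equiv.Perm {v // v ∈ S} := ⟨f, g, hgf, hfg⟩
  let en : Equiv.Perm {v // ¬ v ∈ S} := σ'
  let σ : Equiv.Perm V := ep.subtypeCongr en
  have hin : ∀ v (hv : v ∈ S), σ v = (f ⟨v, hv⟩ : {v // v ∈ S}).1 := by
    intro v hv
    have := Equiv.Perm.subtypeCongr.left_apply ep en hv
    rw [show σ v = ep.subtypeCongr en v from rfl, this]; rfl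
  have hσ1 : σ a₁ = a₃ := by rw [hin a₁ mem1, fa1 mem1]
  have hσ2 : σ a₂ = a₁ := by rw [hin a₂ mem2, fa2 mem2]
  have hσ3 : σ a₃ = a₄ := by rw [hin a₃ mem3, fa3 mem3]
  have hσ4 : σ a₄ = a₂ := by rw [hin a₄ mem4, fa4 mem4]
  have hout : ∀ v (hv : ¬ v ∈ S), σ v = (σ' ⟨v, hv⟩ : ↥(Sᶜ)).1 := by
    intro v hv
    have := Equiv.Perm.subtypeCongr.right_apply ep en hv
    rw [show σ v = ep.subtypeCongr en v from rfl, this]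
  have houtmem : ∀ v (hv : ¬ v ∈ S), σ v ∉ S := by
    intro v hv; rw [hout v hv]; exact (σ' ⟨v, hv⟩).2
  refine ⟨σ, ?_, ?_⟩
  · intro x y hxy
    by_cases hx : x ∈ S <;> by_cases hy : y ∈ S
    · rcases memS x hx with rfl | rfl | rfl | rfl <;>
        rcases memS y hy with rfl | rfl | rfl | rfl
      · exact absurd hxy (G.loopless.irrefl _)
      · rw [hσ1, hσ2]; intro h; exact h13 h.symm
      · exact absurd hxy h13
      · exact absurd hxy h14
      · rw [hσ2, hσ1]; exact h13
      · exact absurd hxy (G.loopless.irrefl _)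
      · rw [hσ2, hσ3]; exact h14
      · exact absurd hxy h24
      · exact absurd hxy.symm h13
      · rw [hσ3, hσ2]; intro h; exact h14 h.symm
      · exact absurd hxy (G.loopless.irrefl _)
      · rw [hσ3, hσ4]; intro h; exact h24 h.symm
      · exact absurd hxy.symm h14
      · exact absurd hxy.symm h24
      · rw [hσ4, hσ3]; exact h24
      · exact absurd hxy (G.loopless.irrefl _)
    · rcases memS x hx with rfl | rfl | rfl | rfl
      · rw [hσ1]; exact h3out _ (houtmem y hy)
      · exact absurd hxy (h2out y hy)
      · exact absurd hxy (h3out y hy)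
      · rw [hσ4]; exact h2out _ (houtmem y hy)
    · rcases memS y hy with rfl | rfl | rfl | rfl
      · rw [hσ1]; intro h; exact h3out _ (houtmem x hx) h.symm
      · exact absurd hxy.symm (h2out x hx)
      · exact absurd hxy.symm (h3out x hx)
      · rw [hσ4]; intro h; exact h2out _ (houtmem x hx) h.symm
    · rw [hout x hx, hout y hy]
      exact hσ' ⟨x, hx⟩ ⟨y, hy⟩ hxy
  · intro x hx y hy hne
    have adjmap' : ∀ u v p q : V, σ u = p → σ v = q → G.Adj u v →
        (EdgeSum G σ).Adj p q := by
      rintro u v p q rfl rfl h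
      exact Or.inr ⟨fun e => h.ne (σ.injective e), u, v, h, rfl, rfl⟩
    rcases memS x hx with rfl | rfl | rfl | rfl <;>
      rcases memS y hy with rfl | rfl | rfl | rfl <;>
      first
      | exact absurd rfl hne
      | exact Or.inl h12 | exact Or.inl h12.symm
      | exact Or.inl h23 | exact Or.inl h23.symm
      | exact Or.inl h34 | exact Or.inl h34.symm
      | exact adjmap' _ _ _ _ hσ2 hσ1 h12.symm
      | exact adjmap' _ _ _ _ hσ1 hσ2 h12
      | exact adjmap' _ _ _ _ hσ2 hσ3 h23
      | exact adjmap' _ _ _ _ hσ3 hσ2 h23.symm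
      | exact adjmap' _ _ _ _ hσ4 hσ3 h34.symm
      | exact adjmap' _ _ _ _ hσ3 hσ4 h34
end

section
/- The graph G = 5C₃ (five vertex-disjoint triangles on 15 vertices) is not uniquely embeddable: there exist embeddings σ₁ and σ₂ such that in G ⊕ σ₁(G) every set of 9 vertices induces at most 4 vertex-disjoint triangles of the original black/red triangle structure, whereas in G ⊕ σ₂(G) there is a set of 9 vertices inducing 5 triangles among the black and red triangles; hence G ⊕ σ₁(G) and G ⊕ σ₂(G) are not isomorphic. -/
open SimpleGraph

/-- The disjoint union of `k` triangles `kC₃`, on vertex set `Fin k × ZMod 3`. -/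
def Triangles (k : ℕ) : SimpleGraph (Fin k × ZMod 3) where
  Adj x y := x.1 = y.1 ∧ x.2 ≠ y.2
  symm := by constructor; rintro x y ⟨h1, h2⟩; exact ⟨h1.symm, h2.symm⟩
  loopless := by constructor; rintro x ⟨_, h⟩; exact h rfl

/-- The family of black triangles `Tᵢ` and red triangles `σ(Tᵢ)` of a packing `σ` of `5C₃`. -/
def BRTriangles (σ : Equiv.Perm (Fin 5 × ZMod 3)) : Set (Set (Fin 5 × ZMod 3)) :=
  {S | (∃ i : Fin 5, S = {x | x.1 = i}) ∨ (∃ i : Fin 5, S = σ '' {x | x.1 = i})}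

/-! ### Auxiliary development -/

abbrev Vtx := Fin 5 × ZMod 3

instance instDecAdjT : DecidableRel (Triangles 5).Adj :=
  fun x y => inferInstanceAs (Decidable (x.1 = y.1 ∧ x.2 ≠ y.2))

/-- First packing: shift row `j` by `j`. -/
def perm1 : Equiv.Perm Vtx :=
  ⟨fun x => (x.1 + (⟨x.2.val % 5, Nat.mod_lt _ (by norm_num)⟩ : Fin 5), x.2),
   fun x => (x.1 - (⟨x.2.val % 5, Nat.mod_lt _ (by norm_num)⟩ : Fin 5), x.2), by decide, by decide⟩

def m2 : Fin 5 → Fin 5 := ![2, 0, 4, 1, 3]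
def m2inv : Fin 5 → Fin 5 := ![1, 3, 0, 4, 2]

/-- Second packing. -/
def perm2 : Equiv.Perm Vtx :=
  ⟨fun x => if x.2 = 0 then x else if x.2 = 1 then (x.1 + 1, x.2) else (m2 x.1, x.2),
   fun x => if x.2 = 0 then x else if x.2 = 1 then (x.1 - 1, x.2) else (m2inv x.1, x.2),
   by decide, by decide⟩

/-- The black triangle as a finset. -/
def Bf (i : Fin 5) : Finset Vtx := Finset.univ.filter (fun x => x.1 = i)

/-- The red triangle as a finset. -/
def Rf (σ : Equiv.Perm Vtx) (i : Fin 5) : Finset Vtx := (Bf i).image σ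

lemma coe_Bf (i : Fin 5) : ((Bf i : Finset Vtx) : Set Vtx) = {x | x.1 = i} := by
  ext x; simp [Bf]

lemma coe_Rf (σ : Equiv.Perm Vtx) (i : Fin 5) :
    ((Rf σ i : Finset Vtx) : Set Vtx) = σ '' {x | x.1 = i} := by
  rw [Rf, Finset.coe_image, coe_Bf]

/-- Black or red triangles indexed by a sum type. -/
def Tf (σ : Equiv.Perm Vtx) : Fin 5 ⊕ Fin 5 → Finset Vtx := Sum.elim Bf (Rf σ)

lemma lemA : ∀ a b c d e : Fin 5, a ≠ b → a ≠ c → b ≠ c → d ≠ e →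
    10 ≤ (Bf a ∪ Bf b ∪ Bf c ∪ Rf perm1 d ∪ Rf perm1 e).card := by decide

lemma lemB : ∀ a b d e f : Fin 5, a ≠ b → d ≠ e → d ≠ f → e ≠ f →
    10 ≤ (Bf a ∪ Bf b ∪ Rf perm1 d ∪ Rf perm1 e ∪ Rf perm1 f).card := by decide

lemma lemC : ∀ a b c d : Fin 5, a ≠ b ∧ a ≠ c ∧ a ≠ d ∧ b ≠ c ∧ b ≠ d ∧ c ≠ d →
    10 ≤ (Bf a ∪ Bf b ∪ Bf c ∪ Bf d).card := by decide

lemma lemD : ∀ a b c d : Fin 5, a ≠ b ∧ a ≠ c ∧ a ≠ d ∧ b ≠ c ∧ b ≠ d ∧ c ≠ d →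
    10 ≤ (Rf perm1 a ∪ Rf perm1 b ∪ Rf perm1 c ∪ Rf perm1 d).card := by decide

/-! ### The edge sum adjacency and the counting invariant -/

lemma edgeSum_adj (σ : Equiv.Perm Vtx) (x y : Vtx) :
    (EdgeSum (Triangles 5) σ).Adj x y ↔
      (Triangles 5).Adj x y ∨ (Triangles 5).Adj (σ.symm x) (σ.symm y) := by
  simp only [EdgeSum, SimpleGraph.sup_adj, SimpleGraph.map_adj, Equiv.coe_toEmbedding]
  constructor
  · rintro (h | ⟨-, a, b, hab, rfl, rfl⟩)
    · exact Or.inl h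
    · refine Or.inr ?_
      simpa [Equiv.symm_apply_apply] using hab
  · rintro (h | h)
    · exact Or.inl h
    · exact Or.inr ⟨fun hxy => h.ne (by rw [hxy]), σ.symm x, σ.symm y, h, σ.apply_symm_apply x, σ.apply_symm_apply y⟩

def Adj' (σ : Equiv.Perm Vtx) (x y : Vtx) : Prop :=
  (Triangles 5).Adj x y ∨ (Triangles 5).Adj (σ.symm x) (σ.symm y)

instance (σ : Equiv.Perm Vtx) : DecidableRel (Adj' σ) := fun _ _ => instDecidableOr

/-- Number of common neighbours of `x` and `y` in the edge sum. -/
def cnn (σ : Equiv.Perm Vtx) (x y : Vtx) : ℕ :=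
  (Finset.univ.filter fun z => Adj' σ x z ∧ Adj' σ y z).card

/-- Number of ordered pairs with at least two common neighbours: a graph invariant. -/
def cnt (σ : Equiv.Perm Vtx) : ℕ :=
  (Finset.univ.filter fun p : Vtx × Vtx => 2 ≤ cnn σ p.1 p.2).card

lemma cnn_iso {σa σb : Equiv.Perm Vtx}
    (e : EdgeSum (Triangles 5) σa ≃g EdgeSum (Triangles 5) σb) (x y : Vtx) :
    cnn σb (e x) (e y) = cnn σa x y := by
  unfold cnn
  rw [← Fintype.card_subtype, ← Fintype.card_subtype]
  have key : ∀ u z : Vtx, Adj' σa u z ↔ Adj' σb (e u) (e z) := fun u z =>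
    (edgeSum_adj σa u z).symm.trans (e.map_rel_iff.symm.trans (edgeSum_adj σb (e u) (e z)))
  exact Fintype.card_congr
    (Equiv.subtypeEquiv e.toEquiv (fun z => and_congr (key x z) (key y z))).symm

lemma cnt_iso {σa σb : Equiv.Perm Vtx}
    (e : EdgeSum (Triangles 5) σa ≃g EdgeSum (Triangles 5) σb) :
    cnt σa = cnt σb := by
  unfold cnt
  rw [← Fintype.card_subtype, ← Fintype.card_subtype]
  exact Fintype.card_congr
    (Equiv.subtypeEquiv (e.toEquiv.prodCongr e.toEquiv) (fun p => by
      show 2 ≤ cnn σa p.1 p.2 ↔ 2 ≤ cnn σb (e p.1) (e p.2)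
      rw [cnn_iso e]))

lemma cnt_perm1 : cnt perm1 = 35 := by decide
lemma cnt_perm2 : cnt perm2 = 39 := by decide

/-! ### Main theorem -/

/-- `5C₃` is not uniquely embeddable: there is an embedding `σ₁` for which every `9`-vertex
set contains at most `4` of the black/red triangles, and an embedding `σ₂` with a `9`-vertex
set containing `5` of them; hence the two edge-sums are not isomorphic. -/
theorem five_c3_not_uniquely_embeddable :
    ∃ σ₁ σ₂ : Equiv.Perm (Fin 5 × ZMod 3),
      IsGraphEmbedding (Triangles 5) σ₁ ∧ IsGraphEmbedding (Triangles 5) σ₂ ∧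
      (∀ W : Set (Fin 5 × ZMod 3), W.ncard = 9 →
        {S ∈ BRTriangles σ₁ | S ⊆ W}.ncard ≤ 4) ∧
      (∃ W : Set (Fin 5 × ZMod 3), W.ncard = 9 ∧
        5 ≤ {S ∈ BRTriangles σ₂ | S ⊆ W}.ncard) ∧
      ¬ Nonempty (EdgeSum (Triangles 5) σ₁ ≃g EdgeSum (Triangles 5) σ₂) := by
  refine ⟨perm1, perm2, ?_, ?_, ?_, ?_, ?_⟩
  · unfold IsGraphEmbedding; decide
  · unfold IsGraphEmbedding; decide
  · -- every 9-set contains at most 4 of the triangles of `perm1`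
    intro W hW
    by_contra hcon
    push_neg at hcon
    have hcon' : 5 ≤ {S ∈ BRTriangles perm1 | S ⊆ W}.ncard := hcon
    have hWfin : W.Finite := by
      by_contra h
      rw [Set.Infinite.ncard h] at hW
      exact absurd hW (by norm_num)
    -- index sets of black/red triangles inside W
    set Ib : Set (Fin 5) := {i | ((Bf i : Finset Vtx) : Set Vtx) ⊆ W} with hIbdef
    set Ir : Set (Fin 5) := {i | ((Rf perm1 i : Finset Vtx) : Set Vtx) ⊆ W} with hIrdef
    have hsubU : ∀ s : Finset Vtx, (s : Set Vtx) ⊆ W → s.card ≤ 9 := by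
      intro s hs
      have := Set.ncard_le_ncard hs hWfin
      rwa [Set.ncard_coe_finset, hW] at this
    have hcup : ∀ s t : Finset Vtx, (s : Set Vtx) ⊆ W → (t : Set Vtx) ⊆ W →
        ((s ∪ t : Finset Vtx) : Set Vtx) ⊆ W := by
      intro s t hs ht
      rw [Finset.coe_union]
      exact Set.union_subset hs ht
    -- the family of triangles inside W is covered by the images of Ib and Ir
    have hcover : {S ∈ BRTriangles perm1 | S ⊆ W} ⊆
        ((fun i => ((Bf i : Finset Vtx) : Set Vtx)) '' Ib) ∪
        ((fun i => ((Rf perm1 i : Finset Vtx) : Set Vtx)) '' Ir) := by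
      rintro S ⟨(⟨i, rfl⟩ | ⟨i, rfl⟩), hsub⟩
      · refine Or.inl ⟨i, ?_, coe_Bf i⟩
        show ((Bf i : Finset Vtx) : Set Vtx) ⊆ W
        rw [coe_Bf]; exact hsub
      · refine Or.inr ⟨i, ?_, coe_Rf perm1 i⟩
        show ((Rf perm1 i : Finset Vtx) : Set Vtx) ⊆ W
        rw [coe_Rf]; exact hsub
    have hsum : 5 ≤ Ib.ncard + Ir.ncard := by
      calc 5 ≤ {S ∈ BRTriangles perm1 | S ⊆ W}.ncard := hcon'
        _ ≤ (((fun i => ((Bf i : Finset Vtx) : Set Vtx)) '' Ib) ∪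
              ((fun i => ((Rf perm1 i : Finset Vtx) : Set Vtx)) '' Ir)).ncard :=
            Set.ncard_le_ncard hcover (((Set.toFinite Ib).image _).union ((Set.toFinite Ir).image _))
        _ ≤ ((fun i => ((Bf i : Finset Vtx) : Set Vtx)) '' Ib).ncard +
              ((fun i => ((Rf perm1 i : Finset Vtx) : Set Vtx)) '' Ir).ncard :=
            Set.ncard_union_le _ _
        _ ≤ Ib.ncard + Ir.ncard :=
            add_le_add (Set.ncard_image_le (Set.toFinite Ib)) (Set.ncard_image_le (Set.toFinite Ir))
    -- case analysis on how many black and red triangles lie inside W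
    have case32 : 3 ≤ Ib.ncard → 2 ≤ Ir.ncard → False := by
      intro h3 h2
      obtain ⟨t, hts, ht⟩ := Set.exists_subset_card_eq h3
      obtain ⟨a, b, c, hab, hac, hbc, rfl⟩ := Set.ncard_eq_three.mp ht
      obtain ⟨u, hus, hu⟩ := Set.exists_subset_card_eq h2
      obtain ⟨d, e, hde, rfl⟩ := Set.ncard_eq_two.mp hu
      have ha : ((Bf a : Finset Vtx) : Set Vtx) ⊆ W := hts (by simp)
      have hb : ((Bf b : Finset Vtx) : Set Vtx) ⊆ W := hts (by simp)
      have hc : ((Bf c : Finset Vtx) : Set Vtx) ⊆ W := hts (by simp)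
      have hd : ((Rf perm1 d : Finset Vtx) : Set Vtx) ⊆ W := hus (by simp)
      have he : ((Rf perm1 e : Finset Vtx) : Set Vtx) ⊆ W := hus (by simp)
      have h9 := hsubU _ (hcup _ _ (hcup _ _ (hcup _ _ (hcup _ _ ha hb) hc) hd) he)
      have h10 := lemA a b c d e hab hac hbc hde
      omega
    have case23 : 2 ≤ Ib.ncard → 3 ≤ Ir.ncard → False := by
      intro h2 h3
      obtain ⟨t, hts, ht⟩ := Set.exists_subset_card_eq h2
      obtain ⟨a, b, hab, rfl⟩ := Set.ncard_eq_two.mp ht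
      obtain ⟨u, hus, hu⟩ := Set.exists_subset_card_eq h3
      obtain ⟨d, e, f, hde, hdf, hef, rfl⟩ := Set.ncard_eq_three.mp hu
      have ha : ((Bf a : Finset Vtx) : Set Vtx) ⊆ W := hts (by simp)
      have hb : ((Bf b : Finset Vtx) : Set Vtx) ⊆ W := hts (by simp)
      have hd : ((Rf perm1 d : Finset Vtx) : Set Vtx) ⊆ W := hus (by simp)
      have he : ((Rf perm1 e : Finset Vtx) : Set Vtx) ⊆ W := hus (by simp)
      have hf : ((Rf perm1 f : Finset Vtx) : Set Vtx) ⊆ W := hus (by simp)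
      have h9 := hsubU _ (hcup _ _ (hcup _ _ (hcup _ _ (hcup _ _ ha hb) hd) he) hf)
      have h10 := lemB a b d e f hab hde hdf hef
      omega
    have case4 : ∀ (J : Set (Fin 5)), 4 ≤ J.ncard →
        (∀ a b c d : Fin 5, a ≠ b → a ≠ c → a ≠ d → b ≠ c → b ≠ d → c ≠ d →
          a ∈ J → b ∈ J → c ∈ J → d ∈ J → False) → False := by
      intro J h4 hcb
      obtain ⟨t, hts, ht⟩ := Set.exists_subset_card_eq h4
      rw [Set.ncard_eq_succ (Set.toFinite t)] at ht
      obtain ⟨a, t', hat', rfl, ht'⟩ := ht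
      obtain ⟨b, c, d, hbc, hbd, hcd, rfl⟩ := Set.ncard_eq_three.mp ht'
      have hab : a ≠ b := fun h => hat' (h ▸ (by simp))
      have hac : a ≠ c := fun h => hat' (h ▸ (by simp))
      have had : a ≠ d := fun h => hat' (h ▸ (by simp))
      exact hcb a b c d hab hac had hbc hbd hcd
        (hts (by simp)) (hts (by simp)) (hts (by simp)) (hts (by simp))
    -- finish by arithmetic case analysis
    rcases Nat.lt_or_ge Ib.ncard 3 with hblt | hbge
    · -- at most 2 black triangles inside W, hence at least 3 red ones
      have hr3 : 3 ≤ Ir.ncard := by omega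
      rcases Nat.lt_or_ge Ib.ncard 2 with hblt1 | hbge2
      · -- at most 1 black triangle, hence at least 4 red ones
        have hr4 : 4 ≤ Ir.ncard := by omega
        refine case4 Ir hr4 ?_
        intro a b c d hab hac had hbc hbd hcd ha hb hc hd
        have h9 := hsubU _ (hcup _ _ (hcup _ _ (hcup _ _ ha hb) hc) hd)
        have h10 := lemD a b c d ⟨hab, hac, had, hbc, hbd, hcd⟩
        omega
      · exact case23 hbge2 hr3
    · rcases Nat.lt_or_ge Ir.ncard 2 with hrlt | hrge
      · -- at most 1 red triangle, hence at least 4 black ones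
        have hb4 : 4 ≤ Ib.ncard := by omega
        refine case4 Ib hb4 ?_
        intro a b c d hab hac had hbc hbd hcd ha hb hc hd
        have h9 := hsubU _ (hcup _ _ (hcup _ _ (hcup _ _ ha hb) hc) hd)
        have h10 := lemC a b c d ⟨hab, hac, had, hbc, hbd, hcd⟩
        omega
      · exact case32 hbge hrge
  · -- a 9-set containing 5 triangles of `perm2`
    refine ⟨((Finset.univ.filter (fun x : Vtx => x.1.val < 3) : Finset Vtx) : Set Vtx), ?_, ?_⟩
    · rw [Set.ncard_coe_finset]; decide
    · set Wf : Finset Vtx := Finset.univ.filter (fun x : Vtx => x.1.val < 3) with hWf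
      set Jf : Finset (Fin 5 ⊕ Fin 5) :=
        {Sum.inl 0, Sum.inl 1, Sum.inl 2, Sum.inr 0, Sum.inr 1} with hJf
      have hJsub : ∀ k ∈ Jf, Tf perm2 k ⊆ Wf := by rw [hJf, hWf]; decide
      have himg : (fun k => ((Tf perm2 k : Finset Vtx) : Set Vtx)) '' (Jf : Set (Fin 5 ⊕ Fin 5)) ⊆
          {S ∈ BRTriangles perm2 | S ⊆ ((Wf : Finset Vtx) : Set Vtx)} := by
        rintro S ⟨k, hk, rfl⟩
        refine ⟨?_, Finset.coe_subset.mpr (hJsub k hk)⟩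
        rcases k with i | i
        · exact Or.inl ⟨i, (coe_Bf i).symm ▸ rfl⟩
        · exact Or.inr ⟨i, (coe_Rf perm2 i).symm ▸ rfl⟩
      have hfin : {S ∈ BRTriangles perm2 | S ⊆ ((Wf : Finset Vtx) : Set Vtx)}.Finite := by
        refine Set.Finite.subset (Set.finite_range
          (fun k => ((Tf perm2 k : Finset Vtx) : Set Vtx))) ?_
        rintro S ⟨(⟨i, rfl⟩ | ⟨i, rfl⟩), -⟩
        · exact ⟨Sum.inl i, coe_Bf i⟩
        · exact ⟨Sum.inr i, coe_Rf perm2 i⟩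
      have h5 : ((fun k => ((Tf perm2 k : Finset Vtx) : Set Vtx)) ''
          (Jf : Set (Fin 5 ⊕ Fin 5))).ncard = 5 := by
        have hcomp : (fun k => ((Tf perm2 k : Finset Vtx) : Set Vtx)) ''
            (Jf : Set (Fin 5 ⊕ Fin 5)) =
            (fun s : Finset Vtx => (s : Set Vtx)) '' ((Jf.image (Tf perm2) : Finset (Finset Vtx)) :
              Set (Finset Vtx)) := by
          rw [Finset.coe_image, ← Set.image_comp]
          rfl
        rw [hcomp, Set.ncard_image_of_injective _ Finset.coe_injective, Set.ncard_coe_finset]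
        rw [hJf]
        decide
      calc (5 : ℕ) = _ := h5.symm
        _ ≤ _ := Set.ncard_le_ncard himg hfin
  · -- the two edge sums are not isomorphic
    rintro ⟨e⟩
    have h := cnt_iso e
    rw [cnt_perm1, cnt_perm2] at h
    exact absurd h (by norm_num)
end
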